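/- The Inner Normalized Wall Shear Stress τ₁(R) = r₁(R)·(Rⁿ/r₁(R)ⁿ - 1)/√(1 - nR²/(n-2)) is a strictly decreasing continuous function of R on (0, √((n-2)/n)), with τ₁(R) → +∞ as R → 0⁺ and τ₁(R) → √n as R → √((n-2)/n)⁻. -/

import Mathlib

open Set Filter Topology

section InnerNWSSAux

lemma Q2pos (x y : ℝ) (hx0 : 0 < x) (hx1 : x < 1) (hy0 : 0 < y) (hy1 : y ≤ 2/3) :
    0 < 16*y^2-8*y^3+16*x*y-40*x*y^2+16*x*y^3+12*x^3-44*x^3*y+47*x^3*y^2-14*x^3*y^3-8*x^4+24*x^4*y-22*x^4*y^2+6*x^4*y^3 := by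
  have ha0 : (0:ℝ) < 8*y^2*(2-y) := by nlinarith
  have ha01 : (0:ℝ) < 8*y*(2-y)*(1-y) := by nlinarith
  have hid : 16*y^2-8*y^3+16*x*y-40*x*y^2+16*x*y^3+12*x^3-44*x^3*y+47*x^3*y^2-14*x^3*y^3-8*x^4+24*x^4*y-22*x^4*y^2+6*x^4*y^3
      = 8*y^2*(2-y) + (8*y*(1-2*y)*(2-y))*x + x^3*((12-44*y+47*y^2-14*y^3) + (-2*(1-y)*(2-y)*(2-3*y))*x) := by ring
  rw [hid]
  set a1 : ℝ := 8*y*(1-2*y)*(2-y) with ha1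
  set a3 : ℝ := 12-44*y+47*y^2-14*y^3 with ha3
  set a4 : ℝ := -2*(1-y)*(2-y)*(2-3*y) with ha4
  have ha4n : a4 ≤ 0 := by nlinarith
  have hx3 : 0 < x^3 := by positivity
  rcases le_or_gt 0 (a3 + a4*x) with htail | htail
  · -- tail nonneg
    rcases le_or_gt 0 a1 with h1 | h1
    · nlinarith [mul_nonneg h1 hx0.le, mul_nonneg hx3.le htail]
    · -- a1 < 0 : a1*x > a1
      have : a1*x > a1 := by nlinarith
      nlinarith [mul_nonneg hx3.le htail]
  · -- tail neg : x^3*(a3+a4*x) > a3+a4*x ≥ a3+a4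
    have h5 : x^3*(a3+a4*x) > a3+a4*x := by
      have hq : (0:ℝ) < (1-x^3)*(-(a3+a4*x)) := mul_pos (by nlinarith [mul_pos (mul_pos hx0 hx0) hx0, mul_pos hx0 hx0]) (by linarith)
      nlinarith [hq]
    have h6 : a3+a4*x ≥ a3+a4 := by nlinarith
    rcases le_or_gt 0 a1 with h1 | h1
    · -- Q2 > a0 + a3 + a4 = 4-20y+41y^2-16y^3 = (2-5y)^2+16y^2(1-y)
      have hpos : (0:ℝ) < 4-20*y+41*y^2-16*y^3 := by nlinarith [sq_nonneg (2-5*y)]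
      have : 8*y^2*(2-y) + a3 + a4 = 4-20*y+41*y^2-16*y^3 := by rw [ha3, ha4]; ring
      nlinarith [mul_nonneg h1 hx0.le]
    · -- Q2 > a0 + a1 + a3 + a4 = (2-y)^2
      have : 8*y^2*(2-y) + a1 + a3 + a4 = (2-y)^2 := by rw [ha1, ha3, ha4]; ring
      have h7 : a1*x > a1 := by nlinarith
      nlinarith [sq_nonneg (2-y)]

noncomputable def psiF (c s : ℝ) : ℝ :=
  1/(1+s) - c^2/(1-c*s) - (1-3*c)/(1+c+s*(1-3*c)) - c/s

noncomputable def phiF (c s : ℝ) : ℝ :=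
  2/(1-c)*(Real.log (1+s) + Real.log (1-c*s) - Real.log (1+c+s*(1-3*c)))
    - 2*c/(1-c)*Real.log s - 2*Real.log (1-c*s) - 2*Real.log (1/(1-c))

lemma hda_div_affine (a b k : ℝ) {s : ℝ} (h : b + k*s ≠ 0) :
    HasDerivAt (fun x => a/(b+k*x)) (-(a*k)/(b+k*s)^2) s := by
  have hu : HasDerivAt (fun x : ℝ => b + k*x) k s := by
    simpa using ((hasDerivAt_id s).const_mul k).const_add b
  have : HasDerivAt (fun x => a/(b+k*x)) _ s := (hasDerivAt_const s a).div hu h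
  convert this using 1
  ring

section
variable {c s : ℝ}

lemma Dpos (hc : 1/3 ≤ c) (hc1 : c < 1) (hs0 : 0 ≤ s) (hs1 : s ≤ 1) : 0 < 1+c+s*(1-3*c) := by
  nlinarith [mul_nonneg (sub_nonneg.2 hs1) (by linarith : (0:ℝ) ≤ 3*c-1)]

lemma cspos (hc : 1/3 ≤ c) (hc1 : c < 1) (hs0 : 0 ≤ s) (hs1 : s ≤ 1) : 0 < 1-c*s := by
  nlinarith [mul_nonneg (by linarith : (0:ℝ) ≤ c) (sub_nonneg.2 hs1)]

set_option maxHeartbeats 1000000 in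
lemma psiF_hasDeriv (hc : 1/3 ≤ c) (hc1 : c < 1) (hs0 : 0 < s) (hs1 : s ≤ 1) :
    HasDerivAt (psiF c)
      (c/s^2 + (1-3*c)^2/(1+c+s*(1-3*c))^2 - 1/(1+s)^2 - c^3/(1-c*s)^2) s := by
  have hD := Dpos hc hc1 hs0.le hs1
  have hcs := cspos hc hc1 hs0.le hs1
  have h1 : HasDerivAt (fun x : ℝ => 1/(1+1*x)) (-(1*1)/(1+1*s)^2) s :=
    hda_div_affine 1 1 1 (by nlinarith)
  have h2 : HasDerivAt (fun x : ℝ => c^2/(1+(-c)*x)) (-(c^2*(-c))/(1+(-c)*s)^2) s :=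
    hda_div_affine (c^2) 1 (-c) (by rw [show 1 + -c*s = 1 - c*s by ring]; positivity)
  have h3 : HasDerivAt (fun x : ℝ => (1-3*c)/((1+c)+(1-3*c)*x))
      (-((1-3*c)*(1-3*c))/((1+c)+(1-3*c)*s)^2) s :=
    hda_div_affine (1-3*c) (1+c) (1-3*c) (by rw [show (1+c)+(1-3*c)*s = 1+c+s*(1-3*c) by ring]; positivity)
  have h4 : HasDerivAt (fun x : ℝ => c/(0+1*x)) (-(c*1)/(0+1*s)^2) s :=
    hda_div_affine c 0 1 (by simpa using hs0.ne')
  have key := ((h1.sub h2).sub h3).sub h4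
  have hfe : psiF c = (fun x : ℝ => 1/(1+1*x) - c^2/(1+(-c)*x) - (1-3*c)/((1+c)+(1-3*c)*x) - c/(0+1*x)) := by
    funext x
    simp only [psiF]
    ring
  have hval : -(1*1)/(1+1*s)^2 - -(c^2*(-c))/(1+(-c)*s)^2
      - -((1-3*c)*(1-3*c))/((1+c)+(1-3*c)*s)^2 - -(c*1)/(0+1*s)^2
      = c/s^2 + (1-3*c)^2/(1+c+s*(1-3*c))^2 - 1/(1+s)^2 - c^3/(1-c*s)^2 := by
    rw [show (1:ℝ)+1*s = 1+s by ring, show (1:ℝ)+(-c)*s = 1-c*s by ring,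
      show (1:ℝ)+c+(1-3*c)*s = 1+c+s*(1-3*c) by ring, show (0:ℝ)+1*s = s by ring]
    ring
  rw [hfe, ← hval]
  exact key

lemma psiF_deriv_pos (hc : 1/3 ≤ c) (hc1 : c < 1) (hs0 : 0 < s) (hs1 : s < 1) :
    0 < c/s^2 + (1-3*c)^2/(1+c+s*(1-3*c))^2 - 1/(1+s)^2 - c^3/(1-c*s)^2 := by
  have hD := Dpos hc hc1 hs0.le hs1.le
  have hcs := cspos hc hc1 hs0.le hs1.le
  have hQ2 : 0 < 16*(1-c)^2-8*(1-c)^3+16*(1-s)*(1-c)-40*(1-s)*(1-c)^2+16*(1-s)*(1-c)^3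
      +12*(1-s)^3-44*(1-s)^3*(1-c)+47*(1-s)^3*(1-c)^2-14*(1-s)^3*(1-c)^3
      -8*(1-s)^4+24*(1-s)^4*(1-c)-22*(1-s)^4*(1-c)^2+6*(1-s)^4*(1-c)^3 :=
    Q2pos (1-s) (1-c) (by linarith) (by linarith) (by linarith) (by linarith)
  have hid : c/s^2 + (1-3*c)^2/(1+c+s*(1-3*c))^2 - 1/(1+s)^2 - c^3/(1-c*s)^2
      = ((1-s)*c*(16*(1-c)^2-8*(1-c)^3+16*(1-s)*(1-c)-40*(1-s)*(1-c)^2+16*(1-s)*(1-c)^3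
      +12*(1-s)^3-44*(1-s)^3*(1-c)+47*(1-s)^3*(1-c)^2-14*(1-s)^3*(1-c)^3
      -8*(1-s)^4+24*(1-s)^4*(1-c)-22*(1-s)^4*(1-c)^2+6*(1-s)^4*(1-c)^3))
        / (s^2*(1+s)^2*(1-c*s)^2*(1+c+s*(1-3*c))^2) := by
    have h1 : (0:ℝ) < 1+s := by linarith
    rw [div_add_div _ _ (by positivity) (by positivity), div_sub_div _ _ (by positivity) (by positivity),
      div_sub_div _ _ (by positivity) (by positivity), div_eq_div_iff (by positivity) (by positivity)]
    ring
  rw [hid]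
  have hcpos : (0:ℝ) < c := by linarith
  apply div_pos
  · exact mul_pos (mul_pos (by linarith) hcpos) hQ2
  · positivity

end


lemma psiF_one (hc1 : c < 1) : psiF c 1 = 0 := by
  have h1 : (1:ℝ) - c > 0 := by linarith
  have h2 : (1:ℝ)+c+1*(1-3*c) = 2*(1-c) := by ring
  simp only [psiF, mul_one, h2]
  field_simp
  ring

lemma psiF_neg (hc : 1/3 ≤ c) (hc1 : c < 1) (hs : s ∈ Ioo (0:ℝ) 1) : psiF c s < 0 := by
  have hmono : StrictMonoOn (psiF c) (Icc s 1) := by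
    apply strictMonoOn_of_deriv_pos (convex_Icc s 1)
    · intro t ht
      exact (psiF_hasDeriv hc hc1 (lt_of_lt_of_le hs.1 ht.1) ht.2).continuousAt.continuousWithinAt
    · intro t ht
      rw [interior_Icc] at ht
      rw [(psiF_hasDeriv hc hc1 (hs.1.trans ht.1) ht.2.le).deriv]
      exact psiF_deriv_pos hc hc1 (hs.1.trans ht.1) ht.2
  have := hmono (left_mem_Icc.2 hs.2.le) (right_mem_Icc.2 hs.2.le) hs.2
  rwa [psiF_one hc1] at this

lemma phiF_hasDeriv (hc : 1/3 ≤ c) (hc1 : c < 1) (hs0 : 0 < s) (hs1 : s ≤ 1) :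
    HasDerivAt (phiF c) (2/(1-c) * psiF c s) s := by
  have hD := Dpos hc hc1 hs0.le hs1
  have hcs := cspos hc hc1 hs0.le hs1
  have h1s : (0:ℝ) < 1 + s := by linarith
  have t1 : HasDerivAt (fun x : ℝ => Real.log (1+x)) (1/(1+s)) s := by
    have h : HasDerivAt (fun x : ℝ => 1+x) 1 s := (hasDerivAt_id s).const_add 1
    simpa using h.log h1s.ne'
  have t2 : HasDerivAt (fun x : ℝ => Real.log (1-c*x)) ((-c)/(1-c*s)) s := by
    have h : HasDerivAt (fun x : ℝ => 1-c*x) (-c) s := by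
      simpa using ((hasDerivAt_id s).const_mul c).const_sub 1
    exact h.log hcs.ne'
  have t3 : HasDerivAt (fun x : ℝ => Real.log (1+c+x*(1-3*c))) ((1-3*c)/(1+c+s*(1-3*c))) s := by
    have h : HasDerivAt (fun x : ℝ => 1+c+x*(1-3*c)) (1-3*c) s := by
      simpa using ((hasDerivAt_id s).mul_const (1-3*c)).const_add (1+c)
    exact h.log hD.ne'
  have t4 : HasDerivAt Real.log s⁻¹ s := Real.hasDerivAt_log hs0.ne'
  have key := ((((t1.add t2).sub t3).const_mul (2/(1-c))).sub (t4.const_mul (2*c/(1-c)))).sub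
      (t2.const_mul 2)
  have key2 := key.sub_const (2*Real.log (1/(1-c)))
  have hfe : (fun x : ℝ => ((2/(1-c)*(Real.log (1+x) + Real.log (1-c*x) - Real.log (1+c+x*(1-3*c)))
      - 2*c/(1-c)*Real.log x) - 2*Real.log (1-c*x)) - 2*Real.log (1/(1-c))) = phiF c := by
    funext x; simp only [phiF]
  replace key2 : HasDerivAt (phiF c) (2 / (1 - c) * (1 / (1 + s) + -c / (1 - c * s) - (1 - 3 * c) / (1 + c + s * (1 - 3 * c))) - 2 * c / (1 - c) * s⁻¹ - 2 * (-c / (1 - c * s))) s := by rw [← hfe]; exact key2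
  convert key2 using 1
  simp only [psiF]
  have h1c : (1:ℝ) - c ≠ 0 := by linarith
  field_simp [h1c, hD.ne', hcs.ne', hs0.ne', h1s.ne']
  ring_nf

lemma phiF_one (hc : 1/3 ≤ c) (hc1 : c < 1) : phiF c 1 = 0 := by
  have h1 : (0:ℝ) < 1 - c := by linarith
  have h2 : (1:ℝ)+c+1*(1-3*c) = 2*(1-c) := by ring
  have h3 : Real.log (2*(1-c)) = Real.log 2 + Real.log (1-c) :=
    Real.log_mul (by norm_num) h1.ne'
  have h4 : Real.log (1/(1-c)) = -Real.log (1-c) := by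
    rw [one_div, Real.log_inv]
  simp only [phiF, mul_one, h2, h3, h4, Real.log_one]
  ring
  
lemma phiF_pos (hc : 1/3 ≤ c) (hc1 : c < 1) (hs : s ∈ Ioo (0:ℝ) 1) : 0 < phiF c s := by
  have hanti : StrictAntiOn (phiF c) (Icc s 1) := by
    apply strictAntiOn_of_deriv_neg (convex_Icc s 1)
    · intro t ht
      exact (phiF_hasDeriv hc hc1 (lt_of_lt_of_le hs.1 ht.1) ht.2).continuousAt.continuousWithinAt
    · intro t ht
      rw [interior_Icc] at ht
      rw [(phiF_hasDeriv hc hc1 (hs.1.trans ht.1) ht.2.le).deriv]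
      have hpsi := psiF_neg hc hc1 ⟨hs.1.trans ht.1, ht.2⟩
      have : (0:ℝ) < 2/(1-c) := div_pos two_pos (by linarith)
      exact mul_neg_of_pos_of_neg this hpsi
  have := hanti (left_mem_Icc.2 hs.2.le) (right_mem_Icc.2 hs.2.le) hs.2
  rwa [phiF_one hc hc1] at this

noncomputable def gfun (n : ℕ) (r : ℝ) : ℝ := (((n:ℝ)-2)/2) * r^(n-2) * (1-r^2)

section
variable {n : ℕ} (hn : 3 ≤ n)

lemma nR3 (hn : 3 ≤ n) : (3:ℝ) ≤ (n:ℝ) := by exact_mod_cast hn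
lemma n2pos (hn : 3 ≤ n) : (0:ℝ) < (n:ℝ)-2 := by have := nR3 hn; linarith
lemma c_ge (hn : 3 ≤ n) : 1/3 ≤ ((n:ℝ)-2)/n := by
  have h := nR3 hn
  rw [le_div_iff₀ (by linarith : (0:ℝ) < (n:ℝ))]
  linarith
lemma c_lt (hn : 3 ≤ n) : ((n:ℝ)-2)/n < 1 := by
  have h := nR3 hn
  rw [div_lt_one (by linarith)]; linarith

lemma key_ineq (hn : 3 ≤ n) {s : ℝ} (hs : s ∈ Ioo (0:ℝ) 1) :
    (((n:ℝ))/2)^2 * s^(n-2) * (1-(((n:ℝ)-2)/n)*s)^2 * (1+(((n:ℝ)-2)/n)+s*(1-3*(((n:ℝ)-2)/n)))^n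
      < ((1+s)*(1-(((n:ℝ)-2)/n)*s))^n := by
  set c : ℝ := ((n:ℝ)-2)/n with hcdef
  have hN := nR3 hn
  have hn2 := n2pos hn
  have hc := c_ge hn
  have hc1 := c_lt hn
  have hnne : (n:ℝ) ≠ 0 := by linarith
  have e1 : 2/(1-c) = (n:ℝ) := by rw [hcdef]; field_simp; ring
  have e2 : 2*c/(1-c) = (n:ℝ)-2 := by rw [hcdef]; field_simp; ring
  have e3 : 1/(1-c) = (n:ℝ)/2 := by rw [hcdef]; field_simp; ring
  have hD := Dpos hc hc1 hs.1.le hs.2.le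
  have hcs := cspos hc hc1 hs.1.le hs.2.le
  have h1s : (0:ℝ) < 1+s := by have := hs.1; linarith
  have hphi := phiF_pos hc hc1 hs
  rw [phiF, e1, e2, e3] at hphi
  -- hphi : 0 < n*(log(1+s)+log(1-cs)-log D) - (n-2)*log s - 2*log(1-cs) - 2*log(n/2)
  have hs0 : (0:ℝ) < s := hs.1
  have hlog : Real.log ((((n:ℝ))/2)^2 * s^(n-2) * (1-c*s)^2 * (1+c+s*(1-3*c))^n)
      < Real.log (((1+s)*(1-c*s))^n) := by
    have hn2R : ((n - 2 : ℕ) : ℝ) = (n:ℝ) - 2 := by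
      have : (2:ℕ) ≤ n := by omega
      push_cast [Nat.cast_sub this]
      ring
    rw [Real.log_pow, Real.log_mul (by positivity) (by positivity),
      Real.log_mul (by positivity) (by positivity),
      Real.log_mul (by positivity) (by positivity),
      Real.log_pow, Real.log_pow, Real.log_pow, Real.log_pow,
      Real.log_mul h1s.ne' hcs.ne', hn2R]
    push_cast
    nlinarith [hphi]
  have hposL : (0:ℝ) < (((n:ℝ))/2)^2 * s^(n-2) * (1-c*s)^2 * (1+c+s*(1-3*c))^n := by positivity
  have hposR : (0:ℝ) < ((1+s)*(1-c*s))^n := by positivity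
  calc (((n:ℝ))/2)^2 * s^(n-2) * (1-c*s)^2 * (1+c+s*(1-3*c))^n
      = Real.exp (Real.log ((((n:ℝ))/2)^2 * s^(n-2) * (1-c*s)^2 * (1+c+s*(1-3*c))^n)) :=
        (Real.exp_log hposL).symm
    _ < Real.exp (Real.log (((1+s)*(1-c*s))^n)) := Real.exp_lt_exp.2 hlog
    _ = ((1+s)*(1-c*s))^n := Real.exp_log hposR

lemma gfun_pos (hn : 3 ≤ n) {r : ℝ} (hr0 : 0 < r) (hr1 : r < 1) : 0 < gfun n r := by
  have := n2pos hn
  have h1 : (0:ℝ) < 1 - r^2 := by nlinarith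
  unfold gfun
  positivity

lemma keyD (hn : 3 ≤ n) {r : ℝ} (hr0 : 0 < r) (hrs : r^2 < ((n:ℝ)-2)/n) :
    (n:ℝ)/((n:ℝ)-2) * (gfun n r)^((2:ℝ)/n)
        * (1+(((n:ℝ)-2)/n)+((n:ℝ)*r^2/((n:ℝ)-2))*(1-3*(((n:ℝ)-2)/n)))
      < (1+(n:ℝ)*r^2/((n:ℝ)-2)) * (1-r^2) := by
  have hN := nR3 hn
  have hn2 := n2pos hn
  have hnne : (n:ℝ) ≠ 0 := by linarith
  have hc := c_ge hn
  have hc1 := c_lt hn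
  set c : ℝ := ((n:ℝ)-2)/n with hcdef
  set s : ℝ := (n:ℝ)*r^2/((n:ℝ)-2) with hsdef
  have hr1 : r < 1 := by nlinarith [hrs, hc1, mul_pos hr0 hr0]
  have hs01 : s ∈ Ioo (0:ℝ) 1 := by
    constructor
    · rw [hsdef]; positivity
    · rw [hsdef, div_lt_one hn2]
      have := (lt_div_iff₀ (show (0:ℝ) < (n:ℝ) by linarith)).1 (hcdef ▸ hrs)
      nlinarith
  have hcs : c * s = r^2 := by rw [hcdef, hsdef]; field_simp
  have hg := gfun_pos hn hr0 hr1
  set A : ℝ := (gfun n r)^((2:ℝ)/n) with hAdef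
  have hA : 0 < A := Real.rpow_pos_of_pos hg _
  have hD : 0 < 1+c+s*(1-3*c) := Dpos hc hc1 hs01.1.le hs01.2.le
  have hAn : A^n = (gfun n r)^2 := by
    rw [hAdef, ← Real.rpow_natCast ((gfun n r)^((2:ℝ)/n)) n, ← Real.rpow_mul hg.le,
      div_mul_cancel₀ _ hnne, show (2:ℝ) = ((2:ℕ):ℝ) by norm_num, Real.rpow_natCast]
  have hkey := key_ineq hn hs01
  have hcsp : 0 < 1 - c*s := cspos hc hc1 hs01.1.le hs01.2.le
  have h1s : (0:ℝ) < 1 + s := by have := hs01.1; linarith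
  have hsplit : ((n:ℝ)/((n:ℝ)-2))^n = ((n:ℝ)/((n:ℝ)-2))^(n-2) * ((n:ℝ)/((n:ℝ)-2))^2 := by
    rw [← pow_add]; congr 1; omega
  have hsdef' : s = ((n:ℝ)/((n:ℝ)-2))*r^2 := by rw [hsdef]; ring
  have hspow : s^(n-2) = ((n:ℝ)/((n:ℝ)-2))^(n-2) * (r^2)^(n-2) := by rw [hsdef', mul_pow]
  have hgsq : (gfun n r)^2 = ((((n:ℝ)-2)/2))^2 * (r^2)^(n-2) * (1-r^2)^2 := by
    unfold gfun
    rw [mul_pow, mul_pow, pow_right_comm]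
  have hid : ((n:ℝ)/((n:ℝ)-2) * A * (1+c+s*(1-3*c)))^n
      = ((n:ℝ)/2)^2 * s^(n-2) * (1-c*s)^2 * (1+c+s*(1-3*c))^n := by
    rw [mul_pow, mul_pow, hAn, hsplit, hgsq, hspow, hcs]
    field_simp
  have hpow : ((n:ℝ)/((n:ℝ)-2) * A * (1+c+s*(1-3*c)))^n < ((1+s)*(1-c*s))^n := by
    rw [hid]; exact hkey
  have hfin : (n:ℝ)/((n:ℝ)-2) * A * (1+c+s*(1-3*c)) < (1+s)*(1-c*s) :=
    lt_of_pow_lt_pow_left₀ n (by positivity) hpow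
  -- now convert to the stated form
  calc (n:ℝ)/((n:ℝ)-2) * (gfun n r)^((2:ℝ)/n)
        * (1+(((n:ℝ)-2)/n)+((n:ℝ)*r^2/((n:ℝ)-2))*(1-3*(((n:ℝ)-2)/n)))
      = (n:ℝ)/((n:ℝ)-2) * A * (1+c+s*(1-3*c)) := by rw [hAdef, hcdef, hsdef]
    _ < (1+s)*(1-c*s) := hfin
    _ = (1+(n:ℝ)*r^2/((n:ℝ)-2)) * (1-r^2) := by rw [hcs, hsdef]

end

noncomputable def Wfun (n : ℕ) (r : ℝ) : ℝ := 1 - (n:ℝ)/((n:ℝ)-2) * (gfun n r)^((2:ℝ)/n)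
noncomputable def Ffun (n : ℕ) (r : ℝ) : ℝ :=
  (((n:ℝ)-2) - n*r^2) / (2*r*Real.sqrt (Wfun n r))
noncomputable def Lfun (n : ℕ) (r : ℝ) : ℝ :=
  Real.log (((n:ℝ)-2) - n*r^2) - Real.log 2 - Real.log r - (1/2)*Real.log (Wfun n r)

section
variable {n : ℕ} {r : ℝ}

lemma r_lt_one (hn : 3 ≤ n) (hr0 : 0 < r) (hrs : r^2 < ((n:ℝ)-2)/n) : r < 1 := by
  have hN := nR3 hn
  have h1 : ((n:ℝ)-2)/n < 1 := by
    rw [div_lt_one (by linarith)]; linarith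
  nlinarith [mul_pos hr0 hr0]

lemma Num_pos (hn : 3 ≤ n) (hr0 : 0 < r) (hrs : r^2 < ((n:ℝ)-2)/n) :
    0 < ((n:ℝ)-2) - n*r^2 := by
  have hN := nR3 hn
  have := (lt_div_iff₀ (show (0:ℝ) < n by linarith)).1 hrs
  nlinarith

lemma gfun_hasDeriv (hn : 3 ≤ n) (r : ℝ) :
    HasDerivAt (gfun n) ((((n:ℝ)-2)/2) * (((n:ℝ)-2)*r^(n-3) - n*r^(n-1))) r := by
  have h : HasDerivAt (fun x : ℝ => (((n:ℝ)-2)/2) * (x^(n-2) - x^n))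
      ((((n:ℝ)-2)/2) * (((n-2:ℕ):ℝ)*r^(n-2-1) - ((n:ℕ):ℝ)*r^(n-1))) r :=
    (((hasDerivAt_pow (n-2) r)).sub (hasDerivAt_pow n r)).const_mul ((((n:ℝ)-2))/2)
  have hfe : (fun x : ℝ => (((n:ℝ)-2)/2) * (x^(n-2) - x^n)) = gfun n := by
    funext x; unfold gfun
    have hx : x^n = x^(n-2)*x^2 := by rw [← pow_add]; congr 1; omega
    rw [hx]; ring
  rw [hfe] at h
  have hc1 : ((n - 2:ℕ):ℝ) = (n:ℝ)-2 := by
    push_cast [Nat.cast_sub (show 2 ≤ n by omega)]; ring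
  have hc2 : n-2-1 = n-3 := by omega
  rw [hc1, hc2] at h
  exact h

lemma gderiv_pos (hn : 3 ≤ n) (hr0 : 0 < r) (hrs : r^2 < ((n:ℝ)-2)/n) :
    0 < (((n:ℝ)-2)/2) * (((n:ℝ)-2)*r^(n-3) - n*r^(n-1)) := by
  have hN := nR3 hn
  have hNum := Num_pos hn hr0 hrs
  have hsp : r^(n-1) = r^(n-3)*r^2 := by rw [← pow_add]; congr 1; omega
  rw [hsp]
  have h3 : (0:ℝ) < r^(n-3) := pow_pos hr0 _
  have hn2 := n2pos hn
  calc (0:ℝ) < (((n:ℝ)-2)/2) * (r^(n-3) * (((n:ℝ)-2) - n*r^2)) :=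
      mul_pos (by linarith) (mul_pos h3 hNum)
    _ = (((n:ℝ)-2)/2) * (((n:ℝ)-2)*r^(n-3) - n*(r^(n-3)*r^2)) := by ring

lemma g_strictMono (hn : 3 ≤ n) : StrictMonoOn (gfun n)
    (Icc 0 (Real.sqrt (((n:ℝ)-2)/n))) := by
  apply strictMonoOn_of_deriv_pos (convex_Icc _ _)
  · exact fun t _ => ((gfun_hasDeriv hn t).continuousAt).continuousWithinAt
  · intro t ht
    rw [interior_Icc] at ht
    rw [(gfun_hasDeriv hn t).deriv]
    have hts : t^2 < ((n:ℝ)-2)/n := (Real.lt_sqrt ht.1.le).1 ht.2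
    exact gderiv_pos hn ht.1 hts

lemma rstar_pos (hn : 3 ≤ n) : 0 < Real.sqrt (((n:ℝ)-2)/n) := by
  have h2 := n2pos hn; have h3 := nR3 hn
  exact Real.sqrt_pos.2 (by positivity)

lemma rstar_sq (hn : 3 ≤ n) : (Real.sqrt (((n:ℝ)-2)/n))^2 = ((n:ℝ)-2)/n := by
  have h2 := n2pos hn; have h3 := nR3 hn
  exact Real.sq_sqrt (by positivity)

lemma rstar_lt_one (hn : 3 ≤ n) : Real.sqrt (((n:ℝ)-2)/n) < 1 := by
  have h2 := n2pos hn; have h3 := nR3 hn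
  nlinarith [rstar_sq hn, rstar_pos hn, (div_lt_one (show (0:ℝ) < n by linarith)).2
    (show (n:ℝ)-2 < n by linarith)]

lemma gfun_rstar (hn : 3 ≤ n) :
    gfun n (Real.sqrt (((n:ℝ)-2)/n)) = (Real.sqrt (((n:ℝ)-2)/n))^n := by
  have h2 := n2pos hn; have h3 := nR3 hn
  set q := Real.sqrt (((n:ℝ)-2)/n) with hq
  have hsq : q^2 = ((n:ℝ)-2)/n := rstar_sq hn
  have hsplit : q^n = q^(n-2)*q^2 := by rw [← pow_add]; congr 1; omega
  unfold gfun
  rw [hsplit, hsq]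
  have hnne : (n:ℝ) ≠ 0 := by linarith
  field_simp
  ring

lemma A_lt (hn : 3 ≤ n) (hr0 : 0 < r) (hrs : r^2 < ((n:ℝ)-2)/n) :
    (gfun n r)^((2:ℝ)/n) < ((n:ℝ)-2)/n := by
  have h2 := n2pos hn; have h3 := nR3 hn
  set q := Real.sqrt (((n:ℝ)-2)/n) with hq
  have hrq : r < q := by
    rw [hq]; exact (Real.lt_sqrt hr0.le).2 hrs
  have hr1 := r_lt_one hn hr0 hrs
  have hg := gfun_pos hn hr0 hr1
  have hglt : gfun n r < gfun n q :=
    g_strictMono hn ⟨hr0.le, hrq.le⟩ ⟨(rstar_pos hn).le, le_refl _⟩ hrq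
  have hgq : gfun n q = q^n := gfun_rstar hn
  have hnne : (n:ℝ) ≠ 0 := by linarith
  calc (gfun n r)^((2:ℝ)/n) < (gfun n q)^((2:ℝ)/n) :=
        Real.rpow_lt_rpow hg.le hglt (by positivity)
    _ = ((n:ℝ)-2)/n := by
        rw [hgq, ← Real.rpow_natCast q n, ← Real.rpow_mul (rstar_pos hn).le,
          mul_div_cancel₀ _ hnne, show ((2:ℝ)) = ((2:ℕ):ℝ) by norm_num]
        rw [Real.rpow_natCast]
        exact rstar_sq hn

lemma W_pos (hn : 3 ≤ n) (hr0 : 0 < r) (hrs : r^2 < ((n:ℝ)-2)/n) : 0 < Wfun n r := by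
  have h2 := n2pos hn; have h3 := nR3 hn
  have hA := A_lt hn hr0 hrs
  unfold Wfun
  rw [sub_pos]
  calc (n:ℝ)/((n:ℝ)-2) * (gfun n r)^((2:ℝ)/n)
      < (n:ℝ)/((n:ℝ)-2) * (((n:ℝ)-2)/n) := by
        apply mul_lt_mul_of_pos_left hA
        positivity
    _ = 1 := by field_simp

lemma W_lt_one (hn : 3 ≤ n) (hr0 : 0 < r) (hrs : r^2 < ((n:ℝ)-2)/n) : Wfun n r < 1 := by
  have h2 := n2pos hn; have h3 := nR3 hn
  have hg := gfun_pos hn hr0 (r_lt_one hn hr0 hrs)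
  have hA : 0 < (gfun n r)^((2:ℝ)/n) := Real.rpow_pos_of_pos hg _
  unfold Wfun
  have : 0 < (n:ℝ)/((n:ℝ)-2) * (gfun n r)^((2:ℝ)/n) := by positivity
  linarith

noncomputable def VAL (n : ℕ) (r : ℝ) : ℝ :=
  ((gfun n r)^((2:ℝ)/n) * (((n:ℝ)-2) - n*r^2)^2
    - ((n:ℝ)-2)*(1-r^2)*(Wfun n r)*(((n:ℝ)-2)+n*r^2))
  / (((n:ℝ)-2)*r*(1-r^2)*(Wfun n r)*(((n:ℝ)-2)-n*r^2))

lemma Lfun_hasDeriv (hn : 3 ≤ n) (hr0 : 0 < r) (hrs : r^2 < ((n:ℝ)-2)/n) :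
    HasDerivAt (Lfun n) (VAL n r) r := by
  have h2 := n2pos hn; have h3 := nR3 hn
  have hr1 := r_lt_one hn hr0 hrs
  have hg := gfun_pos hn hr0 hr1
  have hW := W_pos hn hr0 hrs
  have hNum := Num_pos hn hr0 hrs
  have h1r2 : (0:ℝ) < 1 - r^2 := by nlinarith
  have hnne : (n:ℝ) ≠ 0 := by linarith
  have inner1 : HasDerivAt (fun x : ℝ => ((n:ℝ)-2) - (n:ℝ)*x^2) (-(2*(n:ℝ)*r)) r := by
    have h : HasDerivAt (fun x : ℝ => ((n:ℝ)-2) - (n:ℝ)*x^2) _ r := ((hasDerivAt_pow 2 r).const_mul (n:ℝ)).const_sub ((n:ℝ)-2)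
    convert h using 1
    simp
    ring
  have t1 := inner1.log hNum.ne'
  have t2 := Real.hasDerivAt_log hr0.ne'
  have tg := gfun_hasDeriv hn r
  have tA : HasDerivAt (fun x => (gfun n x)^((2:ℝ)/n))
      ((((n:ℝ)-2)/2) * (((n:ℝ)-2)*r^(n-3) - n*r^(n-1)) * ((2:ℝ)/n)
        * (gfun n r)^((2:ℝ)/n - 1)) r := tg.rpow_const (Or.inl hg.ne')
  have tW : HasDerivAt (Wfun n)
      (-((n:ℝ)/((n:ℝ)-2) * ((((n:ℝ)-2)/2) * (((n:ℝ)-2)*r^(n-3) - n*r^(n-1)) * ((2:ℝ)/n)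
        * (gfun n r)^((2:ℝ)/n - 1)))) r := by
    have h := (tA.const_mul ((n:ℝ)/((n:ℝ)-2))).const_sub 1
    exact h
  have t3 := tW.log hW.ne'
  have total := ((t1.sub_const (Real.log 2)).sub t2).sub (t3.const_mul (1/2))
  have hfe : (fun x : ℝ => ((Real.log (((n:ℝ)-2) - (n:ℝ)*x^2) - Real.log 2) - Real.log x)
      - 1/2 * Real.log (Wfun n x)) = Lfun n := by
    funext x; unfold Lfun; ring
  replace total : HasDerivAt (Lfun n) (-(2 * (n:ℝ) * r) / ((n:ℝ) - 2 - (n:ℝ) * r ^ 2) - r⁻¹ - 1 / 2 * (-((n:ℝ) / ((n:ℝ) - 2) * (((n:ℝ) - 2) / 2 * (((n:ℝ) - 2) * r ^ (n - 3) - (n:ℝ) * r ^ (n - 1)) * ((2:ℝ) / n) * gfun n r ^ ((2:ℝ) / n - 1))) / Wfun n r)) r := by rw [← hfe]; exact total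
  convert total using 1
  have hgp : (gfun n r)^((2:ℝ)/n - 1) = (gfun n r)^((2:ℝ)/n) / gfun n r := by
    rw [Real.rpow_sub hg, Real.rpow_one]
  have hGd : (((n:ℝ)-2)/2) * (((n:ℝ)-2)*r^(n-3) - n*r^(n-1))
      = gfun n r * (((n:ℝ)-2) - n*r^2) / (r*(1-r^2)) := by
    rw [eq_div_iff (by positivity)]
    unfold gfun
    have e1 : r^(n-1) = r^(n-3)*r^2 := by rw [← pow_add]; congr 1; omega
    have e2 : r^(n-2) = r^(n-3)*r := by rw [show n-2 = (n-3)+1 by omega, pow_succ]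
    rw [e1, e2]; ring
  rw [hgp, hGd]
  unfold VAL
  have hWne : Wfun n r ≠ 0 := hW.ne'
  field_simp
  ring

lemma VAL_neg (hn : 3 ≤ n) (hr0 : 0 < r) (hrs : r^2 < ((n:ℝ)-2)/n) : VAL n r < 0 := by
  have h2 := n2pos hn; have h3 := nR3 hn
  have hr1 := r_lt_one hn hr0 hrs
  have hg := gfun_pos hn hr0 hr1
  have hW := W_pos hn hr0 hrs
  have hNum := Num_pos hn hr0 hrs
  have h1r2 : (0:ℝ) < 1 - r^2 := by nlinarith
  have hkd := keyD hn hr0 hrs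
  have hnne : (n:ℝ) ≠ 0 := by linarith
  have hdiff : (gfun n r)^((2:ℝ)/n) * (((n:ℝ)-2) - n*r^2)^2
      - ((n:ℝ)-2)*(1-r^2)*(Wfun n r)*(((n:ℝ)-2)+n*r^2)
      = (((n:ℝ)-2))^2 * (((n:ℝ)/((n:ℝ)-2) * (gfun n r)^((2:ℝ)/n)
        * (1+(((n:ℝ)-2)/n)+((n:ℝ)*r^2/((n:ℝ)-2))*(1-3*(((n:ℝ)-2)/n)))
        - (1+(n:ℝ)*r^2/((n:ℝ)-2)) * (1-r^2))) := by
    unfold Wfun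
    field_simp
    ring
  apply div_neg_of_neg_of_pos
  · rw [hdiff]
    apply mul_neg_of_pos_of_neg (by positivity)
    linarith
  · positivity

lemma mem_Ioo_facts (hn : 3 ≤ n) (hr : r ∈ Ioo (0:ℝ) (Real.sqrt (((n:ℝ)-2)/n))) :
    0 < r ∧ r^2 < ((n:ℝ)-2)/n := ⟨hr.1, (Real.lt_sqrt hr.1.le).1 hr.2⟩

lemma Lfun_strictAnti (hn : 3 ≤ n) :
    StrictAntiOn (Lfun n) (Ioo 0 (Real.sqrt (((n:ℝ)-2)/n))) := by
  apply strictAntiOn_of_deriv_neg (convex_Ioo _ _)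
  · intro t ht
    obtain ⟨ht0, hts⟩ := mem_Ioo_facts hn ht
    exact (Lfun_hasDeriv hn ht0 hts).continuousAt.continuousWithinAt
  · intro t ht
    rw [interior_Ioo] at ht
    obtain ⟨ht0, hts⟩ := mem_Ioo_facts hn ht
    rw [(Lfun_hasDeriv hn ht0 hts).deriv]
    exact VAL_neg hn ht0 hts

lemma Ffun_eq_exp (hn : 3 ≤ n) (hr0 : 0 < r) (hrs : r^2 < ((n:ℝ)-2)/n) :
    Ffun n r = Real.exp (Lfun n r) := by
  have hW := W_pos hn hr0 hrs
  have hNum := Num_pos hn hr0 hrs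
  unfold Ffun Lfun
  rw [Real.exp_sub, Real.exp_sub, Real.exp_sub, Real.exp_log hNum, Real.exp_log hr0,
    Real.exp_log (by norm_num : (0:ℝ) < 2)]
  have hsqrt : Real.exp (1/2 * Real.log (Wfun n r)) = Real.sqrt (Wfun n r) := by
    rw [mul_comm, Real.exp_mul, Real.exp_log hW, Real.sqrt_eq_rpow]
  rw [hsqrt]
  field_simp

lemma Ffun_pos (hn : 3 ≤ n) (hr0 : 0 < r) (hrs : r^2 < ((n:ℝ)-2)/n) : 0 < Ffun n r := by
  rw [Ffun_eq_exp hn hr0 hrs]; exact Real.exp_pos _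

lemma Ffun_strictAnti (hn : 3 ≤ n) :
    StrictAntiOn (Ffun n) (Ioo 0 (Real.sqrt (((n:ℝ)-2)/n))) := by
  intro a ha b hb hab
  obtain ⟨ha0, has⟩ := mem_Ioo_facts hn ha
  obtain ⟨hb0, hbs⟩ := mem_Ioo_facts hn hb
  rw [Ffun_eq_exp hn ha0 has, Ffun_eq_exp hn hb0 hbs]
  exact Real.exp_lt_exp.2 (Lfun_strictAnti hn ha hb hab)

lemma Ffun_contOn (hn : 3 ≤ n) :
    ContinuousOn (Ffun n) (Ioo 0 (Real.sqrt (((n:ℝ)-2)/n))) := by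
  have hL : ContinuousOn (Lfun n) (Ioo 0 (Real.sqrt (((n:ℝ)-2)/n))) := by
    intro t ht
    obtain ⟨ht0, hts⟩ := mem_Ioo_facts hn ht
    exact (Lfun_hasDeriv hn ht0 hts).continuousAt.continuousWithinAt
  have : ContinuousOn (fun r => Real.exp (Lfun n r)) (Ioo 0 (Real.sqrt (((n:ℝ)-2)/n))) :=
    Real.continuous_exp.comp_continuousOn hL
  apply this.congr
  intro t ht
  obtain ⟨ht0, hts⟩ := mem_Ioo_facts hn ht
  exact Ffun_eq_exp hn ht0 hts

end

noncomputable def gd (n : ℕ) (r : ℝ) : ℝ := (((n:ℝ)-2)/2) * (((n:ℝ)-2)*r^(n-3) - n*r^(n-1))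

lemma gd_hasDeriv {n : ℕ} (hn : 3 ≤ n) (r : ℝ) :
    HasDerivAt (gd n)
      ((((n:ℝ)-2)/2) * (((n:ℝ)-2)*(((n-3:ℕ):ℝ)*r^(n-3-1)) - n*(((n-1:ℕ):ℝ)*r^(n-1-1)))) r := by
  exact (((hasDerivAt_pow (n-3) r).const_mul ((n:ℝ)-2)).sub
    ((hasDerivAt_pow (n-1) r).const_mul ((n:ℝ)))).const_mul (((n:ℝ)-2)/2)

lemma gdd_at_rstar {n : ℕ} (hn : 3 ≤ n) :
    (((n:ℝ)-2)/2) * (((n:ℝ)-2)*(((n-3:ℕ):ℝ)*(Real.sqrt (((n:ℝ)-2)/n))^(n-3-1))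
      - n*(((n-1:ℕ):ℝ)*(Real.sqrt (((n:ℝ)-2)/n))^(n-1-1)))
    = -2 * (((n:ℝ)*((n:ℝ)-2)/2) * (Real.sqrt (((n:ℝ)-2)/n))^(n-2)) := by
  set q := Real.sqrt (((n:ℝ)-2)/n) with hq
  have hq0 := rstar_pos hn
  have hq2 : q^2 = ((n:ℝ)-2)/n := rstar_sq hn
  have hN := nR3 hn
  have hnne : (n:ℝ) ≠ 0 := by linarith
  rcases eq_or_lt_of_le hn with h3 | h4
  · -- n = 3
    subst h3
    norm_num
    nlinarith [hq2, hq0]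
  · -- n ≥ 4
    have hn4 : 4 ≤ n := h4
    have e1 : n-1-1 = n-2 := by omega
    have e2 : n-3-1 = n-4 := by omega
    have e3 : n-2 = (n-4)+2 := by omega
    have c1 : ((n-3:ℕ):ℝ) = (n:ℝ)-3 := by push_cast [Nat.cast_sub (show 3 ≤ n by omega)]; ring
    have c2 : ((n-1:ℕ):ℝ) = (n:ℝ)-1 := by push_cast [Nat.cast_sub (show 1 ≤ n by omega)]; ring
    rw [e1, e2, c1, c2, e3, pow_add, hq2]
    field_simp
    ring

lemma H_tendsto {n : ℕ} (hn : 3 ≤ n) :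
    Tendsto (fun r => (gfun n (Real.sqrt (((n:ℝ)-2)/n)) - gfun n r)
        / (Real.sqrt (((n:ℝ)-2)/n) - r)^2)
      (𝓝[<] (Real.sqrt (((n:ℝ)-2)/n)))
      (𝓝 (((n:ℝ)*((n:ℝ)-2)/2) * (Real.sqrt (((n:ℝ)-2)/n))^(n-2))) := by
  set q := Real.sqrt (((n:ℝ)-2)/n) with hq
  have hq0 := rstar_pos hn
  have hq2 : q^2 = ((n:ℝ)-2)/n := rstar_sq hn
  have hN := nR3 hn
  -- gd q = 0
  have hgdq : gd n q = 0 := by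
    unfold gd
    have e : q^(n-1) = q^(n-3)*q^2 := by rw [← pow_add]; congr 1; omega
    rw [e, hq2]
    field_simp
    ring
  -- second L'Hopital : gd r / (2*(q - r)) → L
  have hL2 : Tendsto (fun r => gd n r / (2*(q - r))) (𝓝[<] q)
      (𝓝 (((n:ℝ)*((n:ℝ)-2)/2) * q^(n-2))) := by
    apply HasDerivAt.lhopital_zero_nhdsLT
      (f' := fun r => (((n:ℝ)-2)/2) * (((n:ℝ)-2)*(((n-3:ℕ):ℝ)*r^(n-3-1)) - n*(((n-1:ℕ):ℝ)*r^(n-1-1))))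
      (g' := fun _ => -2)
    · exact Eventually.of_forall (fun x => gd_hasDeriv hn x)
    · apply Eventually.of_forall
      intro x
      have h : HasDerivAt (fun r : ℝ => 2*(q - r)) (2*(0-1)) x :=
        ((hasDerivAt_const x q).sub (hasDerivAt_id x)).const_mul 2
      simpa using h
    · exact Eventually.of_forall (fun x => by norm_num)
    · -- gd → 0
      have hc : ContinuousAt (gd n) q := (gd_hasDeriv hn q).continuousAt
      have h : Tendsto (gd n) (𝓝[<] q) (𝓝 (gd n q)) := hc.tendsto.mono_left nhdsWithin_le_nhds
      rwa [hgdq] at h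
    · -- 2(q-r) → 0
      have hc : Continuous (fun r : ℝ => 2*(q - r)) := by continuity
      have h : Tendsto (fun r : ℝ => 2*(q - r)) (𝓝[<] q) (𝓝 (2*(q-q))) :=
        (hc.tendsto q).mono_left nhdsWithin_le_nhds
      simpa using h
    · -- ratio of second derivatives tends
      have hc : ContinuousAt (fun r => (((n:ℝ)-2)/2) * (((n:ℝ)-2)*(((n-3:ℕ):ℝ)*r^(n-3-1))
          - n*(((n-1:ℕ):ℝ)*r^(n-1-1)))) q := by fun_prop
      have h1 : Tendsto (fun r => (((n:ℝ)-2)/2) * (((n:ℝ)-2)*(((n-3:ℕ):ℝ)*r^(n-3-1))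
          - n*(((n-1:ℕ):ℝ)*r^(n-1-1)))) (𝓝[<] q)
          (𝓝 ((((n:ℝ)-2)/2) * (((n:ℝ)-2)*(((n-3:ℕ):ℝ)*q^(n-3-1)) - n*(((n-1:ℕ):ℝ)*q^(n-1-1))))) :=
        hc.tendsto.mono_left nhdsWithin_le_nhds
      have h2 := h1.div_const (-2)
      rw [gdd_at_rstar hn] at h2
      have h3 : -2 * (((n:ℝ)*((n:ℝ)-2)/2) * q^(n-2)) / (-2) = ((n:ℝ)*((n:ℝ)-2)/2) * q^(n-2) := by
        ring
      rw [h3] at h2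
      exact h2
  -- first L'Hopital
  apply HasDerivAt.lhopital_zero_nhdsLT (f' := fun r => -(gd n r))
      (g' := fun r => -(2*(q - r)))
  · apply Eventually.of_forall
    intro x
    have h : HasDerivAt (fun r => gfun n q - gfun n r) _ x := ((hasDerivAt_const x (gfun n q)).sub (gfun_hasDeriv hn x))
    simpa [gd] using h
  · apply Eventually.of_forall
    intro x
    have h : HasDerivAt (fun r : ℝ => (q - r)^2) (-(2*(q-x))) x := by
      have h0 : HasDerivAt (fun r : ℝ => q - r) (0-1) x :=
        (hasDerivAt_const x q).sub (hasDerivAt_id x)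
      have : HasDerivAt (fun r : ℝ => (q - r)^2) _ x := h0.pow 2
      convert this using 1
      simp
    exact h
  · -- -(2(q-x)) ≠ 0 eventually (x < q)
    filter_upwards [eventually_mem_nhdsWithin] with x hx
    have : x < q := hx
    intro hcon
    nlinarith [hcon]
  · have hc := ((hasDerivAt_const q (gfun n q)).sub (gfun_hasDeriv hn q)).continuousAt
    have h : Tendsto (fun r => gfun n q - gfun n r) (𝓝[<] q) (𝓝 (gfun n q - gfun n q)) :=
      hc.tendsto.mono_left nhdsWithin_le_nhds
    simpa using h
  · have hc : Continuous (fun r : ℝ => (q - r)^2) := by continuity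
    have h : Tendsto (fun r : ℝ => (q - r)^2) (𝓝[<] q) (𝓝 ((q-q)^2)) :=
      (hc.tendsto q).mono_left nhdsWithin_le_nhds
    simpa using h
  · have : (fun r => -(gd n r) / -(2*(q - r))) = (fun r => gd n r / (2*(q - r))) := by
      funext r; rw [neg_div_neg_eq]
    rw [this]
    exact hL2


lemma gfun_continuous (n : ℕ) : Continuous (gfun n) := by
  unfold gfun
  fun_prop

lemma slope_tendsto {n : ℕ} (hn : 3 ≤ n) :
    Tendsto (fun v : ℝ => (1-v)/(1-v^((2:ℝ)/n))) (𝓝[≠] (1:ℝ)) (𝓝 ((n:ℝ)/2)) := by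
  have hN := nR3 hn
  have hne : (2:ℝ)/n ≠ 0 := by positivity
  have hd : HasDerivAt (fun x : ℝ => x^((2:ℝ)/n)) ((2:ℝ)/n) 1 := by
    have h := Real.hasDerivAt_rpow_const (x := (1:ℝ)) (p := (2:ℝ)/n) (Or.inl one_ne_zero)
    simpa using h
  have hslope := hasDerivAt_iff_tendsto_slope.1 hd
  have hinv := hslope.inv₀ hne
  rw [show ((2:ℝ)/n)⁻¹ = (n:ℝ)/2 by rw [inv_div]] at hinv
  apply hinv.congr
  intro x
  have hsl : slope (fun x : ℝ => x^((2:ℝ)/n)) 1 x = (x^((2:ℝ)/n) - 1)/(x - 1) := by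
    rw [slope_def_field, Real.one_rpow]
  rw [hsl, inv_div, show (1:ℝ)-x = -(x-1) by ring,
    show (1:ℝ)-x^((2:ℝ)/n) = -(x^((2:ℝ)/n)-1) by ring, neg_div_neg_eq]

section
variable {n : ℕ}

lemma gq_rpow (hn : 3 ≤ n) :
    (gfun n (Real.sqrt (((n:ℝ)-2)/n)))^((2:ℝ)/n) = ((n:ℝ)-2)/n := by
  have hN := nR3 hn
  have hnne : (n:ℝ) ≠ 0 := by linarith
  rw [gfun_rstar hn, ← Real.rpow_natCast (Real.sqrt (((n:ℝ)-2)/n)) n,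
    ← Real.rpow_mul (rstar_pos hn).le, mul_div_cancel₀ _ hnne,
    show ((2:ℝ)) = ((2:ℕ):ℝ) by norm_num, Real.rpow_natCast]
  exact rstar_sq hn

lemma Wv (hn : 3 ≤ n) {r : ℝ} (hr0 : 0 < r) (hrs : r^2 < ((n:ℝ)-2)/n) :
    Wfun n r = 1 - (gfun n r / gfun n (Real.sqrt (((n:ℝ)-2)/n)))^((2:ℝ)/n) := by
  have hN := nR3 hn
  have h2 := n2pos hn
  have hg := gfun_pos hn hr0 (r_lt_one hn hr0 hrs)
  have hgq : 0 < gfun n (Real.sqrt (((n:ℝ)-2)/n)) :=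
    gfun_pos hn (rstar_pos hn) (rstar_lt_one hn)
  rw [Real.div_rpow hg.le hgq.le, gq_rpow hn]
  unfold Wfun
  have hA : (0:ℝ) ≤ (gfun n r)^((2:ℝ)/n) := (Real.rpow_pos_of_pos hg _).le
  congr 1
  rw [div_div_eq_mul_div]
  ring

lemma Ffun_sqrtG (hn : 3 ≤ n) {r : ℝ} (hr0 : 0 < r) (hrs : r^2 < ((n:ℝ)-2)/n) :
    Ffun n r = Real.sqrt ((((n:ℝ)-2) - n*r^2)^2 / (4*r^2 * Wfun n r)) := by
  have hW := W_pos hn hr0 hrs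
  have hNum := Num_pos hn hr0 hrs
  have hsW : (0:ℝ) ≤ Real.sqrt (Wfun n r) := Real.sqrt_nonneg _
  have h4 : 4*r^2*Wfun n r = (2*r*Real.sqrt (Wfun n r))^2 := by
    have := Real.sq_sqrt hW.le
    nlinarith [this]
  rw [h4, Real.sqrt_div (sq_nonneg _), Real.sqrt_sq hNum.le, Real.sqrt_sq (by positivity)]
  rfl

lemma G_tendsto (hn : 3 ≤ n) :
    Tendsto (fun r => (((n:ℝ)-2) - n*r^2)^2 / (4*r^2 * Wfun n r))
      (𝓝[Ioo (0:ℝ) (Real.sqrt (((n:ℝ)-2)/n))] (Real.sqrt (((n:ℝ)-2)/n))) (𝓝 (n:ℝ)) := by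
  have hN := nR3 hn
  have h2 := n2pos hn
  have hq0 := rstar_pos hn
  have hq2 := rstar_sq hn
  set q := Real.sqrt (((n:ℝ)-2)/n) with hqdef
  have hgq : 0 < gfun n q := gfun_pos hn hq0 (rstar_lt_one hn)
  have hfle : 𝓝[Ioo (0:ℝ) q] q ≤ 𝓝[<] q := nhdsWithin_mono q Ioo_subset_Iio_self
  have hqn2 : (0:ℝ) < q^(n-2) := pow_pos hq0 _
  -- T1
  have hT1 : Tendsto (fun r => (n:ℝ)^2*(q+r)^2/(4*r^2)) (𝓝[Ioo (0:ℝ) q] q) (𝓝 ((n:ℝ)^2)) := by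
    have hc : ContinuousAt (fun r => (n:ℝ)^2*(q+r)^2/(4*r^2)) q := by
      apply ContinuousAt.div
      · fun_prop
      · fun_prop
      · positivity
    have h := hc.tendsto.mono_left (nhdsWithin_le_nhds (s := Ioo (0:ℝ) q))
    have hval : (n:ℝ)^2*(q+q)^2/(4*q^2) = (n:ℝ)^2 := by
      field_simp
      ring
    rwa [hval] at h
  -- T2
  have hLne : ((n:ℝ)*((n:ℝ)-2)/2) * q^(n-2) ≠ 0 := by positivity
  have hT2 : Tendsto (fun r => gfun n q / ((gfun n q - gfun n r)/(q - r)^2))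
      (𝓝[Ioo (0:ℝ) q] q) (𝓝 (gfun n q / (((n:ℝ)*((n:ℝ)-2)/2) * q^(n-2)))) :=
    tendsto_const_nhds.div ((H_tendsto hn).mono_left hfle) hLne
  -- T3 : slope ∘ v
  have hv : Tendsto (fun r => gfun n r / gfun n q) (𝓝[Ioo (0:ℝ) q] q) (𝓝[≠] (1:ℝ)) := by
    rw [tendsto_nhdsWithin_iff]
    constructor
    · have hc : ContinuousAt (fun r => gfun n r / gfun n q) q :=
        ((gfun_continuous n).continuousAt).div continuousAt_const hgq.ne'
      have h := hc.tendsto.mono_left (nhdsWithin_le_nhds (s := Ioo (0:ℝ) q))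
      rwa [div_self hgq.ne'] at h
    · filter_upwards [self_mem_nhdsWithin] with r hr
      have hlt : gfun n r < gfun n q :=
        g_strictMono hn ⟨hr.1.le, hr.2.le⟩ ⟨hq0.le, le_refl q⟩ hr.2
      have : gfun n r / gfun n q < 1 := (div_lt_one hgq).2 hlt
      exact ne_of_lt this
  have hT3 : Tendsto (fun r => (1 - gfun n r / gfun n q)
      / (1 - (gfun n r / gfun n q)^((2:ℝ)/n))) (𝓝[Ioo (0:ℝ) q] q) (𝓝 ((n:ℝ)/2)) :=
    (slope_tendsto hn).comp hv
  -- product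
  have hprod := (hT1.mul hT2).mul hT3
  have hval : (n:ℝ)^2 * (gfun n q / (((n:ℝ)*((n:ℝ)-2)/2) * q^(n-2))) * ((n:ℝ)/2) = (n:ℝ) := by
    rw [gfun_rstar hn, show q^n = q^(n-2)*q^2 by rw [← pow_add]; congr 1; omega, hq2]
    field_simp
  rw [hval] at hprod
  apply hprod.congr'
  filter_upwards [self_mem_nhdsWithin] with r hr
  obtain ⟨hr0, hrs⟩ := mem_Ioo_facts hn hr
  have hW := W_pos hn hr0 hrs
  have hgr : 0 < gfun n r := gfun_pos hn hr0 (r_lt_one hn hr0 hrs)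
  have hglt : gfun n r < gfun n q :=
    g_strictMono hn ⟨hr0.le, hr.2.le⟩ ⟨hq0.le, le_refl q⟩ hr.2
  have hWv := Wv hn hr0 hrs
  have hqr : q - r ≠ 0 := by have := hr.2; intro h; nlinarith
  have hNum : ((n:ℝ)-2) - n*r^2 = (n:ℝ)*(q-r)*(q+r) := by
    have : (n:ℝ)-2 = n*q^2 := by rw [hq2]; field_simp
    rw [this]; ring
  rw [← hqdef] at hWv
  rw [hNum, hWv]
  have hgne : gfun n q - gfun n r ≠ 0 := by linarith
  have hWne : (1:ℝ) - (gfun n r / gfun n q)^((2:ℝ)/n) ≠ 0 := by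
    rw [← hWv]; exact hW.ne'
  field_simp

lemma Ffun_tendsto_rstar (hn : 3 ≤ n) :
    Tendsto (Ffun n) (𝓝[Ioo (0:ℝ) (Real.sqrt (((n:ℝ)-2)/n))] (Real.sqrt (((n:ℝ)-2)/n)))
      (𝓝 (Real.sqrt (n:ℝ))) := by
  have h := (Real.continuous_sqrt.continuousAt.tendsto (x := (n:ℝ))).comp (G_tendsto hn)
  apply h.congr'
  filter_upwards [self_mem_nhdsWithin] with r hr
  obtain ⟨hr0, hrs⟩ := mem_Ioo_facts hn hr
  exact (Ffun_sqrtG hn hr0 hrs).symm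

end

end InnerNWSSAux

/-- the Inner Normalized Wall Shear Stress
`τ₁(R) = r₁(R)(Rⁿ/r₁(R)ⁿ - 1)/√(1 - nR²/(n-2))` is strictly decreasing and
continuous on `(0, √((n-2)/n))`, with `τ₁ → +∞` as `R → 0⁻` and `τ₁ → √n`
as `R → √((n-2)/n)⁻`. -/
theorem inner_NWSS_strict_anti (n : ℕ) (hn : 3 ≤ n) (r₁ : ℝ → ℝ)
    (hr₁ : ∀ R ∈ Ioo (0 : ℝ) (Real.sqrt (((n : ℝ) - 2) / n)),
      0 < r₁ R ∧ r₁ R < R ∧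
        1 - (r₁ R) ^ 2 - 2 * R ^ n / (((n : ℝ) - 2) * (r₁ R) ^ (n - 2)) = 0) :
    StrictAntiOn
      (fun R : ℝ => r₁ R * (R ^ n / (r₁ R) ^ n - 1) / Real.sqrt (1 - n * R ^ 2 / ((n : ℝ) - 2)))
      (Ioo (0 : ℝ) (Real.sqrt (((n : ℝ) - 2) / n))) ∧
    ContinuousOn
      (fun R : ℝ => r₁ R * (R ^ n / (r₁ R) ^ n - 1) / Real.sqrt (1 - n * R ^ 2 / ((n : ℝ) - 2)))
      (Ioo (0 : ℝ) (Real.sqrt (((n : ℝ) - 2) / n))) ∧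
    Tendsto
      (fun R : ℝ => r₁ R * (R ^ n / (r₁ R) ^ n - 1) / Real.sqrt (1 - n * R ^ 2 / ((n : ℝ) - 2)))
      (𝓝[>] 0) atTop ∧
    Tendsto
      (fun R : ℝ => r₁ R * (R ^ n / (r₁ R) ^ n - 1) / Real.sqrt (1 - n * R ^ 2 / ((n : ℝ) - 2)))
      (𝓝[<] (Real.sqrt (((n : ℝ) - 2) / n))) (𝓝 (Real.sqrt n)) := by
  have hN := nR3 hn
  have hn2 := n2pos hn
  have hnne : (n:ℝ) ≠ 0 := by linarith
  have hq0 := rstar_pos hn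
  have hq2 := rstar_sq hn
  set q : ℝ := Real.sqrt (((n:ℝ)-2)/n) with hqdef
  set τ : ℝ → ℝ := fun R : ℝ =>
    r₁ R * (R ^ n / (r₁ R) ^ n - 1) / Real.sqrt (1 - n * R ^ 2 / ((n : ℝ) - 2)) with hτdef
  -- basic facts about r₁
  have hfacts : ∀ R ∈ Ioo (0:ℝ) q, 0 < r₁ R ∧ r₁ R < R ∧ gfun n (r₁ R) = R^n
      ∧ r₁ R ∈ Ioo (0:ℝ) q := by
    intro R hR
    obtain ⟨h0, hlt, heq⟩ := hr₁ R hR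
    have hmem : r₁ R ∈ Ioo (0:ℝ) q := ⟨h0, hlt.trans hR.2⟩
    refine ⟨h0, hlt, ?_, hmem⟩
    have hden : ((n:ℝ)-2) * (r₁ R)^(n-2) ≠ 0 := by
      have := pow_pos h0 (n-2); positivity
    have h1 : 2*R^n / (((n:ℝ)-2) * (r₁ R)^(n-2)) = 1 - (r₁ R)^2 := by linarith
    rw [div_eq_iff hden] at h1
    unfold gfun
    linear_combination -h1/2
  -- r₁ strictly monotone
  have hr₁mono : StrictMonoOn r₁ (Ioo (0:ℝ) q) := by
    intro a ha b hb hab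
    obtain ⟨ha0, _, hga, hamem⟩ := hfacts a ha
    obtain ⟨hb0, _, hgb, hbmem⟩ := hfacts b hb
    have hpow : a^n < b^n := by
      apply pow_lt_pow_left₀ hab ha.1.le
      omega
    rw [← hga, ← hgb] at hpow
    exact ((g_strictMono hn).lt_iff_lt ⟨hamem.1.le, hamem.2.le⟩ ⟨hbmem.1.le, hbmem.2.le⟩).1 hpow
  -- r₁ image
  have hr₁image : r₁ '' (Ioo (0:ℝ) q) = Ioo (0:ℝ) q := by
    apply Subset.antisymm
    · rintro _ ⟨R, hR, rfl⟩
      exact (hfacts R hR).2.2.2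
    · intro ρ hρ
      have hρ1 : ρ < 1 := lt_trans hρ.2 (rstar_lt_one hn)
      have hgρ : 0 < gfun n ρ := gfun_pos hn hρ.1 hρ1
      set R : ℝ := (gfun n ρ)^((1:ℝ)/n) with hRdef
      have hR0 : 0 < R := Real.rpow_pos_of_pos hgρ _
      have hRn : R^n = gfun n ρ := by
        rw [hRdef, ← Real.rpow_natCast ((gfun n ρ)^((1:ℝ)/n)) n, ← Real.rpow_mul hgρ.le,
          one_div_mul_cancel hnne, Real.rpow_one]
      have hRq : R < q := by
        have hglt : gfun n ρ < gfun n q :=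
          g_strictMono hn ⟨hρ.1.le, hρ.2.le⟩ ⟨hq0.le, le_refl q⟩ hρ.2
        have : R^n < q^n := by rw [hRn, ← gfun_rstar hn]; exact hglt
        exact lt_of_pow_lt_pow_left₀ n hq0.le this
      have hRmem : R ∈ Ioo (0:ℝ) q := ⟨hR0, hRq⟩
      obtain ⟨h0', _, hg', hmem'⟩ := hfacts R hRmem
      have : gfun n (r₁ R) = gfun n ρ := by rw [hg', hRn]
      have heqρ : r₁ R = ρ :=
        (g_strictMono hn).injOn ⟨hmem'.1.le, hmem'.2.le⟩ ⟨hρ.1.le, hρ.2.le⟩ this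
      exact ⟨R, hRmem, heqρ⟩
  -- r₁ continuous
  have hr₁cont : ContinuousOn r₁ (Ioo (0:ℝ) q) := by
    intro R hR
    apply ContinuousAt.continuousWithinAt
    apply hr₁mono.continuousAt_of_image_mem_nhds (isOpen_Ioo.mem_nhds hR)
    rw [hr₁image]
    exact isOpen_Ioo.mem_nhds (hfacts R hR).2.2.2
  -- pow-rpow fact
  have hpow_rpow : ∀ R : ℝ, 0 < R → ((R^n : ℝ))^((2:ℝ)/n) = R^2 := by
    intro R hR
    rw [← Real.rpow_natCast R n, ← Real.rpow_mul hR.le,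
      mul_div_cancel₀ _ hnne, show ((2:ℝ)) = ((2:ℕ):ℝ) by norm_num, Real.rpow_natCast]
  -- τ = Ffun ∘ r₁ on Ioo
  have htau_eq : ∀ R ∈ Ioo (0:ℝ) q, τ R = Ffun n (r₁ R) := by
    intro R hR
    obtain ⟨h0, hlt, hg, hmem⟩ := hfacts R hR
    obtain ⟨_, hrs⟩ := mem_Ioo_facts hn hmem
    set r : ℝ := r₁ R with hrdef
    have hWr : 1 - (n:ℝ)*R^2/((n:ℝ)-2) = Wfun n r := by
      unfold Wfun
      rw [hg, hpow_rpow R hR.1]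
      ring
    have hrn : r^n = r^(n-2)*r^2 := by rw [← pow_add]; congr 1; omega
    have hnum : r * (R^n/r^n - 1) = (((n:ℝ)-2) - n*r^2)/(2*r) := by
      rw [← hg]
      unfold gfun
      rw [hrn]
      have hp : (0:ℝ) < r^(n-2) := pow_pos h0 _
      field_simp
      ring
    rw [hτdef]
    show r * (R^n/r^n - 1) / Real.sqrt (1 - n*R^2/((n:ℝ)-2)) = Ffun n r
    rw [hnum, hWr]
    unfold Ffun
    rw [div_div, mul_assoc]
  refine ⟨?_, ?_, ?_, ?_⟩
  · -- strict anti
    intro a ha b hb hab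
    rw [htau_eq a ha, htau_eq b hb]
    exact Ffun_strictAnti hn (hfacts a ha).2.2.2 (hfacts b hb).2.2.2 (hr₁mono ha hb hab)
  · -- continuous
    have hcomp : ContinuousOn (Ffun n ∘ r₁) (Ioo (0:ℝ) q) :=
      (Ffun_contOn hn).comp hr₁cont (fun R hR => (hfacts R hR).2.2.2)
    exact hcomp.congr htau_eq
  · -- atTop at 0⁺
    set δ : ℝ := min q (Real.sqrt (((n:ℝ)-2)/(2*(n:ℝ)))) with hδdef
    have hδ0 : 0 < δ := lt_min hq0 (Real.sqrt_pos.2 (by positivity))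
    have hδsq : δ^2 ≤ ((n:ℝ)-2)/(2*(n:ℝ)) := by
      have h1 : δ ≤ Real.sqrt (((n:ℝ)-2)/(2*(n:ℝ))) := min_le_right _ _
      have h2 : (Real.sqrt (((n:ℝ)-2)/(2*(n:ℝ))))^2 = ((n:ℝ)-2)/(2*(n:ℝ)) :=
        Real.sq_sqrt (by positivity)
      nlinarith [hδ0, h1, h2]
    apply tendsto_atTop_mono' (𝓝[>] (0:ℝ))
        (f₁ := fun R => (((n:ℝ)-2)/4) * R⁻¹)
    · filter_upwards [Ioo_mem_nhdsGT hδ0] with R hR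
      have hRq : R ∈ Ioo (0:ℝ) q := ⟨hR.1, lt_of_lt_of_le hR.2 (min_le_left _ _)⟩
      obtain ⟨h0, hlt, hg, hmem⟩ := hfacts R hRq
      obtain ⟨_, hrs⟩ := mem_Ioo_facts hn hmem
      have hW := W_pos hn h0 hrs
      have hW1 := W_lt_one hn h0 hrs
      have hNum := Num_pos hn h0 hrs
      have hsW1 : Real.sqrt (Wfun n (r₁ R)) ≤ 1 := Real.sqrt_le_one.2 hW1.le
      have hsW0 : 0 < Real.sqrt (Wfun n (r₁ R)) := Real.sqrt_pos.2 hW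
      have hNum2 : ((n:ℝ)-2)/2 ≤ ((n:ℝ)-2) - n*(r₁ R)^2 := by
        have hr2 : (r₁ R)^2 < δ^2 := by nlinarith [hR.2, hlt, h0]
        have hnd : (n:ℝ)*(((n:ℝ)-2)/(2*(n:ℝ))) = ((n:ℝ)-2)/2 := by field_simp
        nlinarith [mul_lt_mul_of_pos_left hr2 (show (0:ℝ) < (n:ℝ) by linarith),
          mul_le_mul_of_nonneg_left hδsq (show (0:ℝ) ≤ (n:ℝ) by linarith)]
      rw [htau_eq R hRq]
      unfold Ffun
      calc (((n:ℝ)-2)/4) * R⁻¹ = (((n:ℝ)-2)/2)/(2*R) := by ring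
        _ ≤ (((n:ℝ)-2) - n*(r₁ R)^2) / (2*(r₁ R)*Real.sqrt (Wfun n (r₁ R))) := by
            apply div_le_div₀ (by linarith) hNum2 (by positivity)
            nlinarith [hsW1, hsW0, h0, hlt]
    · exact Tendsto.const_mul_atTop (by linarith : (0:ℝ) < ((n:ℝ)-2)/4) tendsto_inv_nhdsGT_zero
  · -- limit at rstar
    have hr₁tends : Tendsto r₁ (𝓝[<] q) (𝓝[Ioo (0:ℝ) q] q) := by
      rw [tendsto_nhdsWithin_iff]
      constructor
      · rw [tendsto_order]
        constructor
        · intro b hb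
          rcases le_or_gt b 0 with hb0 | hb0
          · filter_upwards [Ioo_mem_nhdsLT hq0] with R hR
            exact lt_of_le_of_lt hb0 (hfacts R hR).1
          · have hb1 : b < 1 := lt_trans hb (rstar_lt_one hn)
            have hgb : 0 < gfun n b := gfun_pos hn hb0 hb1
            set R0 : ℝ := (gfun n b)^((1:ℝ)/n) with hR0def
            have hR0pos : 0 < R0 := Real.rpow_pos_of_pos hgb _
            have hR0n : R0^n = gfun n b := by
              rw [hR0def, ← Real.rpow_natCast ((gfun n b)^((1:ℝ)/n)) n,
                ← Real.rpow_mul hgb.le, one_div_mul_cancel hnne, Real.rpow_one]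
            have hR0q : R0 < q := by
              have hglt : gfun n b < gfun n q :=
                g_strictMono hn ⟨hb0.le, hb.le⟩ ⟨hq0.le, le_refl q⟩ hb
              have : R0^n < q^n := by rw [hR0n, ← gfun_rstar hn]; exact hglt
              exact lt_of_pow_lt_pow_left₀ n hq0.le this
            filter_upwards [Ioo_mem_nhdsLT hR0q] with R hR
            have hRq : R ∈ Ioo (0:ℝ) q := ⟨hR0pos.trans hR.1, hR.2⟩
            obtain ⟨h0, hlt, hg, hmem⟩ := hfacts R hRq
            have hgRb : gfun n b < gfun n (r₁ R) := by
              rw [hg, ← hR0n]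
              exact pow_lt_pow_left₀ hR.1 hR0pos.le (by omega)
            exact ((g_strictMono hn).lt_iff_lt ⟨hb0.le, hb.le⟩
              ⟨hmem.1.le, hmem.2.le⟩).1 hgRb
        · intro b hb
          filter_upwards [Ioo_mem_nhdsLT hq0] with R hR
          exact lt_trans (hfacts R hR).2.2.2.2 hb
      · filter_upwards [Ioo_mem_nhdsLT hq0] with R hR
        exact (hfacts R hR).2.2.2
    have hFr := (Ffun_tendsto_rstar hn).comp hr₁tends
    apply hFr.congr'
    filter_upwards [Ioo_mem_nhdsLT hq0] with R hR
    exact (htau_eq R hR).symm
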